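/- arXiv:0909.0338 — 4 statements merged into one kernel-verified Lean document; each statement's English description precedes it below -/
import Mathlib

section
/- Let Zᵢ, i ∈ ℕ, be i.i.d. standard normal random variables and wₙ = n/√(2π). Then for every y > 0, limₙ P[ wₙ · min_{i=1,…,n} |Zᵢ| > y ] = e^{−2y}; i.e., wₙ · min_{i≤n}|Zᵢ| converges in distribution to an exponential distribution with mean 1/2. -/
open MeasureTheory ProbabilityTheory Filter Topology Real

lemma aux_lt_iInf {n : ℕ} (hn : 0 < n) (f : Fin n → ℝ) (a : ℝ) :
    a < ⨅ i, f i ↔ ∀ i, a < f i := by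
  haveI : Nonempty (Fin n) := ⟨⟨0, hn⟩⟩
  obtain ⟨i0, hi0⟩ := Finite.exists_min f
  have h : ⨅ i, f i = f i0 :=
    le_antisymm (ciInf_le (Set.Finite.bddBelow (Set.finite_range f)) i0) (le_ciInf hi0)
  rw [h]
  exact ⟨fun h' i => h'.trans_le (hi0 i), fun h' => h' i0⟩

lemma aux_pdf (x : ℝ) : gaussianPDFReal 0 1 x = (Real.sqrt (2*π))⁻¹ * Real.exp (-x^2/2) := by
  simp [gaussianPDFReal]

lemma aux_Q_eq (t : ℝ) :
    ((gaussianReal 0 1) {x : ℝ | |x| ≤ t}).toReal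
      = ∫ x in Set.Icc (-t) t, gaussianPDFReal 0 1 x := by
  have hs : {x : ℝ | |x| ≤ t} = Set.Icc (-t) t := by
    ext x; simp [abs_le]
  rw [hs, gaussianReal_apply_eq_integral _ one_ne_zero,
    ENNReal.toReal_ofReal (integral_nonneg fun x => gaussianPDFReal_nonneg _ _ _)]

lemma aux_Q_le (t : ℝ) (ht : 0 ≤ t) :
    ((gaussianReal 0 1) {x : ℝ | |x| ≤ t}).toReal ≤ 2 * t * (Real.sqrt (2*π))⁻¹ := by
  rw [aux_Q_eq]
  have h1 : ∫ x in Set.Icc (-t) t, gaussianPDFReal 0 1 x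
      ≤ ∫ _x in Set.Icc (-t) t, (Real.sqrt (2*π))⁻¹ := by
    apply setIntegral_mono_on ((integrable_gaussianPDFReal 0 1).restrict)
      (by exact integrableOn_const (by simp [Real.volume_Icc]) enorm_ne_top)
      measurableSet_Icc
    intro x _
    rw [aux_pdf]
    have : Real.exp (-x^2/2) ≤ 1 := by
      rw [Real.exp_le_one_iff]
      nlinarith [sq_nonneg x]
    nlinarith [inv_nonneg.2 (Real.sqrt_nonneg (2*π))]
  calc _ ≤ _ := h1
    _ = 2 * t * (Real.sqrt (2*π))⁻¹ := by
        rw [setIntegral_const, measureReal_def, Real.volume_Icc, smul_eq_mul,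
          ENNReal.toReal_ofReal (by linarith)]
        ring

lemma aux_Q_ge (t : ℝ) (ht : 0 ≤ t) :
    2 * t * (Real.sqrt (2*π))⁻¹ * Real.exp (-t^2/2)
      ≤ ((gaussianReal 0 1) {x : ℝ | |x| ≤ t}).toReal := by
  rw [aux_Q_eq]
  have h1 : ∫ _x in Set.Icc (-t) t, (Real.sqrt (2*π))⁻¹ * Real.exp (-t^2/2)
      ≤ ∫ x in Set.Icc (-t) t, gaussianPDFReal 0 1 x := by
    apply setIntegral_mono_on
      (by exact integrableOn_const (by simp [Real.volume_Icc]) enorm_ne_top)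
      ((integrable_gaussianPDFReal 0 1).restrict)
      measurableSet_Icc
    intro x hx
    rw [aux_pdf]
    have hx2 : x^2 ≤ t^2 := sq_le_sq' hx.1 hx.2
    have : Real.exp (-t^2/2) ≤ Real.exp (-x^2/2) := Real.exp_le_exp.2 (by linarith)
    nlinarith [inv_nonneg.2 (Real.sqrt_nonneg (2*π))]
  calc 2 * t * (Real.sqrt (2*π))⁻¹ * Real.exp (-t^2/2)
      = ∫ _x in Set.Icc (-t) t, (Real.sqrt (2*π))⁻¹ * Real.exp (-t^2/2) := by
        rw [setIntegral_const, measureReal_def, Real.volume_Icc, smul_eq_mul,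
          ENNReal.toReal_ofReal (by linarith)]
        ring
    _ ≤ _ := h1

lemma aux_tendsto (y : ℝ) (hy : 0 < y) :
    Tendsto (fun n : ℕ =>
      (1 - ((gaussianReal 0 1) {x : ℝ | |x| ≤ y * Real.sqrt (2*π) / n}).toReal) ^ n)
      atTop (𝓝 (Real.exp (-2 * y))) := by
  have hπ : (0:ℝ) < 2 * π := by positivity
  have hc : (0:ℝ) < Real.sqrt (2*π) := Real.sqrt_pos.2 hπ
  set c := Real.sqrt (2*π) with hcdef
  set Q : ℕ → ℝ := fun n => ((gaussianReal 0 1) {x : ℝ | |x| ≤ y * c / n}).toReal with hQdef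
  apply tendsto_of_tendsto_of_tendsto_of_le_of_le'
    (g := fun n : ℕ => (1 + (-(2*y))/n)^n)
    (h := fun n : ℕ => Real.exp (-(2*y*Real.exp (-(y*c/n)^2/2))))
  · have := Real.tendsto_one_add_div_pow_exp (-(2*y))
    convert this using 2
    ring
  · have hu : Tendsto (fun n : ℕ => y*c/(n:ℝ)) atTop (𝓝 0) :=
      tendsto_const_div_atTop_nhds_zero_nat _
    have hcont : Continuous (fun s : ℝ => Real.exp (-(2*y*Real.exp (-s^2/2)))) := by
      fun_prop
    have h2 := (hcont.tendsto 0).comp hu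
    have h0 : Real.exp (-(2*y*Real.exp (-(0:ℝ)^2/2))) = Real.exp (-2*y) := by
      norm_num
    rw [h0] at h2
    exact h2
  · have hev1 : ∀ᶠ n : ℕ in atTop, (2*y : ℝ) ≤ (n:ℝ) :=
      tendsto_natCast_atTop_atTop.eventually_ge_atTop _
    filter_upwards [hev1, eventually_gt_atTop 0] with n hny hn
    have hnr : (0:ℝ) < n := Nat.cast_pos.2 hn
    have ht0 : (0:ℝ) ≤ y * c / n := by positivity
    have hQub : Q n ≤ 2*y/n := by
      have := aux_Q_le (y*c/n) ht0
      have heq : 2 * (y*c/n) * c⁻¹ = 2*y/n := by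
        field_simp
      rw [heq] at this
      exact this
    have h1 : (0:ℝ) ≤ 1 + (-(2*y))/n := by
      have : (-(2*y))/n = -(2*y/n) := by ring
      rw [this]
      linarith [(div_le_one hnr).2 hny]
    apply pow_le_pow_left₀ h1
    have : (-(2*y))/n = -(2*y/n) := by ring
    rw [this]
    linarith
  · filter_upwards [eventually_gt_atTop 0] with n hn
    have hnr : (0:ℝ) < n := Nat.cast_pos.2 hn
    have ht0 : (0:ℝ) ≤ y * c / n := by positivity
    have hQ0 : 0 ≤ Q n := ENNReal.toReal_nonneg
    have hQ1 : Q n ≤ 1 := by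
      have h := ENNReal.toReal_mono ENNReal.one_ne_top
        (prob_le_one (μ := gaussianReal 0 1) (s := {x : ℝ | |x| ≤ y*c/n}))
      simpa using h
    have hQlb : (2*y/n) * Real.exp (-(y*c/n)^2/2) ≤ Q n := by
      have := aux_Q_ge (y*c/n) ht0
      have heq : 2 * (y*c/n) * c⁻¹ = 2*y/n := by
        field_simp
      rw [heq] at this
      exact this
    calc (1 - Q n)^n ≤ (Real.exp (-(Q n)))^n := by
          apply pow_le_pow_left₀ (by linarith)
          linarith [Real.add_one_le_exp (-(Q n))]
      _ = Real.exp ((n:ℝ) * (-(Q n))) := (Real.exp_nat_mul _ n).symm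
      _ ≤ Real.exp (-(2*y*Real.exp (-(y*c/n)^2/2))) := by
          apply Real.exp_le_exp.2
          have h3 : 2*y*Real.exp (-(y*c/n)^2/2) ≤ (n:ℝ) * Q n := by
            have := mul_le_mul_of_nonneg_left hQlb (le_of_lt hnr)
            calc 2*y*Real.exp (-(y*c/n)^2/2) = (n:ℝ) * ((2*y/n) * Real.exp (-(y*c/n)^2/2)) := by
                  field_simp
              _ ≤ (n:ℝ) * Q n := this
          nlinarith

/-- If `Zᵢ` are i.i.d. standard normal and `wₙ = n/√(2π)`, then
`wₙ · min_{i<n} |Zᵢ|` converges in distribution to the exponential law with mean `1/2`: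
for every `y > 0`, `P[wₙ minᵢ |Zᵢ| > y] → e^{−2y}`. -/
theorem min_abs_iid_gaussian_tendsto_exponential {Ω : Type*} [MeasurableSpace Ω]
    (μ : Measure Ω) [IsProbabilityMeasure μ] (Z : ℕ → Ω → ℝ)
    (hmeas : ∀ i, Measurable (Z i))
    (hindep : iIndepFun Z μ)
    (hlaw : ∀ i, μ.map (Z i) = gaussianReal 0 1)
    (y : ℝ) (hy : 0 < y) :
    Tendsto (fun n : ℕ =>
        (μ {ω | (n / Real.sqrt (2 * π)) * (⨅ i : Fin n, |Z i ω|) > y}).toReal)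
      atTop (𝓝 (Real.exp (-2 * y))) := by
  have key : ∀ n : ℕ, 0 < n →
      (μ {ω | (n / Real.sqrt (2 * π)) * (⨅ i : Fin n, |Z i ω|) > y}).toReal
        = (1 - ((gaussianReal 0 1) {x : ℝ | |x| ≤ y * Real.sqrt (2*π) / n}).toReal) ^ n := by
    intro n hn
    have hπ : (0:ℝ) < 2 * π := by positivity
    have hc : (0:ℝ) < Real.sqrt (2*π) := Real.sqrt_pos.2 hπ
    have hnr : (0:ℝ) < n := Nat.cast_pos.2 hn
    set t : ℝ := y * Real.sqrt (2*π) / n with hts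
    have hmset : MeasurableSet {x : ℝ | t < |x|} :=
      (isOpen_lt continuous_const continuous_abs).measurableSet
    have hset : {ω | (n / Real.sqrt (2 * π)) * (⨅ i : Fin n, |Z i ω|) > y}
        = ⋂ i ∈ Finset.range n, Z i ⁻¹' {x : ℝ | t < |x|} := by
      ext ω
      simp only [Set.mem_setOf_eq, Set.mem_iInter, Set.mem_preimage, Finset.mem_range, gt_iff_lt]
      have hd : (0:ℝ) < (n : ℝ) / Real.sqrt (2*π) := by positivity
      have h1 : y < (n / Real.sqrt (2 * π)) * (⨅ i : Fin n, |Z i ω|)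
          ↔ t < ⨅ i : Fin n, |Z i ω| := by
        rw [mul_comm, ← div_lt_iff₀ hd]
        congr! 1
        rw [hts]
        field_simp
      rw [h1, aux_lt_iInf hn]
      constructor
      · intro h i hi
        exact h ⟨i, hi⟩
      · intro h i
        exact h i i.2
    rw [hset, hindep.meas_biInter (fun i _ => ⟨{x : ℝ | t < |x|}, hmset, rfl⟩)]
    have hterm : ∀ i, μ (Z i ⁻¹' {x : ℝ | t < |x|}) = gaussianReal 0 1 {x : ℝ | t < |x|} := by
      intro i
      rw [← hlaw i, Measure.map_apply (hmeas i) hmset]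
    simp_rw [hterm]
    rw [Finset.prod_const, Finset.card_range, ENNReal.toReal_pow]
    congr 1
    have hcompl : {x : ℝ | t < |x|} = {x : ℝ | |x| ≤ t}ᶜ := by
      ext x; simp [not_le]
    rw [hcompl, prob_compl_eq_one_sub (isClosed_le continuous_abs continuous_const).measurableSet,
      ENNReal.toReal_sub_of_le prob_le_one ENNReal.one_ne_top, ENNReal.toReal_one]
  apply Tendsto.congr' _ (aux_tendsto y hy)
  filter_upwards [eventually_gt_atTop 0] with n hn
  exact (key n hn).symm
end

section
/- Let uₙ be a sequence of positive reals with √(2π) uₙ e^{uₙ²/2} ~ n as n → ∞ (ratio tends to 1). Then uₙ = √(2 log n) − ((1/2) log log n + log(2√π) + o(1)) / √(2 log n) as n → ∞. -/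
open Filter Topology Real

set_option maxHeartbeats 1000000

/-- If `√(2π) uₙ e^{uₙ²/2} ~ n`, then
`uₙ = √(2 log n) − ((1/2) log log n + log(2√π) + o(1))/√(2 log n)`, i.e.
`√(2 log n)(uₙ − √(2 log n)) + (1/2) log log n + log(2√π) → 0`. -/
theorem asymptotic_expansion_of_un (u : ℕ → ℝ) (hu : ∀ n, 0 < u n)
    (h : Tendsto (fun n : ℕ => Real.sqrt (2 * π) * u n * Real.exp (u n ^ 2 / 2) / n)
      atTop (𝓝 1)) :
    Tendsto (fun n : ℕ =>
        Real.sqrt (2 * Real.log n) * (u n - Real.sqrt (2 * Real.log n))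
          + (1 / 2) * Real.log (Real.log n) + Real.log (2 * Real.sqrt π))
      atTop (𝓝 0) := by
  have hπ : (0:ℝ) < π := Real.pi_pos
  set L : ℕ → ℝ := fun n => Real.log n with hLdef
  set e : ℕ → ℝ := fun n => Real.log (2*π) / 2 + Real.log (u n) + (u n)^2/2 - L n with hedef
  have hL : Tendsto L atTop atTop :=
    Real.tendsto_log_atTop.comp tendsto_natCast_atTop_atTop
  -- e tends to 0
  have he : Tendsto e atTop (𝓝 0) := by
    have h0 := (Real.continuousAt_log one_ne_zero).tendsto.comp h
    rw [Real.log_one] at h0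
    apply h0.congr'
    filter_upwards [eventually_ge_atTop 1] with n hn
    have hn0 : (0:ℝ) < n := by exact_mod_cast hn
    simp only [Function.comp_apply]
    have h1 : (0:ℝ) < Real.sqrt (2*π) := Real.sqrt_pos.2 (by positivity)
    have h2 : (0:ℝ) < Real.exp ((u n)^2/2) := Real.exp_pos _
    rw [Real.log_div (mul_pos (mul_pos h1 (hu n)) h2).ne' hn0.ne',
      Real.log_mul (mul_pos h1 (hu n)).ne' h2.ne',
      Real.log_mul h1.ne' (hu n).ne', Real.log_exp, Real.log_sqrt (by positivity)]
  -- the basic relation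
  have hrel : ∀ n, (u n)^2 + Real.log ((u n)^2) = 2 * L n - Real.log (2*π) + 2 * e n := by
    intro n
    have : Real.log ((u n)^2) = 2 * Real.log (u n) := by
      rw [Real.log_pow]; push_cast; ring
    rw [this, hedef]
    ring
  -- upper bound
  have hub : ∀ᶠ n in atTop, (u n)^2 ≤ 2 * L n + 1 := by
    have h1 : ∀ᶠ n in atTop, 2 * e n ≤ 1 := by
      have h2e : Tendsto (fun n => 2 * e n) atTop (𝓝 (2 * 0)) := he.const_mul 2
      rw [mul_zero] at h2e
      exact h2e.eventually (eventually_le_nhds one_pos)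
    have h2 : ∀ᶠ n in atTop, (1:ℝ) ≤ 2 * L n := by
      have := hL.eventually_ge_atTop 1
      filter_upwards [this] with n hn; linarith
    filter_upwards [h1, h2] with n h1 h2
    rcases le_or_gt 1 ((u n)^2) with hw | hw
    · have hlw : 0 ≤ Real.log ((u n)^2) := Real.log_nonneg hw
      have hl2π : 0 ≤ Real.log (2*π) := Real.log_nonneg (by nlinarith [Real.pi_gt_three])
      nlinarith [hrel n]
    · linarith
  -- lower bound
  have hlb : ∀ᶠ n in atTop, 2 * L n - Real.log (2*π) + 2 * e n - Real.log (2 * L n + 1) ≤ (u n)^2 := by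
    filter_upwards [hub] with n hn
    have hw : 0 < (u n)^2 := pow_pos (hu n) 2
    have : Real.log ((u n)^2) ≤ Real.log (2 * L n + 1) := Real.log_le_log hw hn
    nlinarith [hrel n]
  have h2L : Tendsto (fun n => 2 * L n) atTop atTop := hL.const_mul_atTop two_pos
  have h2Lpos : ∀ᶠ n in atTop, 0 < 2 * L n := h2L.eventually_gt_atTop 0
  have hinv : Tendsto (fun n => (2 * L n)⁻¹) atTop (𝓝 0) := h2L.inv_tendsto_atTop
  -- log(2L+1)/(2L) → 0
  have hglog : Tendsto (fun n => Real.log (2 * L n + 1) / (2 * L n)) atTop (𝓝 0) := by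
    have hgen : Tendsto (fun x : ℝ => Real.log (2 * x + 1) / (2 * x)) atTop (𝓝 0) := by
      have hia : Tendsto (fun x : ℝ => 2 * x) atTop atTop :=
        (tendsto_id (α := ℝ)).const_mul_atTop two_pos
      have hib : Tendsto (fun x : ℝ => (2 * x)⁻¹) atTop (𝓝 0) := hia.inv_tendsto_atTop
      have hic : Tendsto (fun x : ℝ => Real.log x / x) atTop (𝓝 0) :=
        Real.isLittleO_log_id_atTop.tendsto_div_nhds_zero
      have hup : Tendsto (fun x : ℝ => Real.log 3 * (2 * x)⁻¹ + Real.log x / x * (1/2))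
          atTop (𝓝 (Real.log 3 * 0 + 0 * (1/2))) :=
        (tendsto_const_nhds.mul hib).add (hic.mul tendsto_const_nhds)
      rw [mul_zero, zero_mul, add_zero] at hup
      apply tendsto_of_tendsto_of_tendsto_of_le_of_le' tendsto_const_nhds hup
      · filter_upwards [eventually_ge_atTop (1:ℝ)] with x hx
        exact div_nonneg (Real.log_nonneg (by linarith)) (by linarith)
      · filter_upwards [eventually_ge_atTop (1:ℝ)] with x hx
        have hx0 : (0:ℝ) < x := by linarith
        have hl : Real.log (2*x+1) ≤ Real.log 3 + Real.log x := by
          rw [← Real.log_mul (by norm_num) hx0.ne']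
          exact Real.log_le_log (by linarith) (by linarith)
        have heqq : Real.log 3 * (2*x)⁻¹ + Real.log x / x * (1/2)
            = (Real.log 3 + Real.log x) / (2*x) := by
          field_simp
        rw [heqq]
        gcongr
    exact hgen.comp hL
  -- r tends to 1
  have hr : Tendsto (fun n => (u n)^2 / (2 * L n)) atTop (𝓝 1) := by
    have hupperlim : Tendsto (fun n => 1 + (2 * L n)⁻¹) atTop (𝓝 (1 + 0)) :=
      tendsto_const_nhds.add hinv
    rw [add_zero] at hupperlim
    have hlowerlim : Tendsto (fun n =>
        1 - Real.log (2*π) * (2 * L n)⁻¹ + 2 * e n * (2 * L n)⁻¹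
          - Real.log (2 * L n + 1) / (2 * L n)) atTop
        (𝓝 (1 - Real.log (2*π) * 0 + 2 * 0 * 0 - 0)) := by
      exact ((tendsto_const_nhds.sub (tendsto_const_nhds.mul hinv)).add
        (((he.const_mul 2).mul hinv))).sub hglog
    have hval : (1 - Real.log (2*π) * 0 + 2 * 0 * 0 - 0 : ℝ) = 1 := by norm_num
    rw [hval] at hlowerlim
    apply tendsto_of_tendsto_of_tendsto_of_le_of_le' hlowerlim hupperlim
    · filter_upwards [hlb, h2Lpos] with n h1 h2
      have heqq : 1 - Real.log (2*π) * (2 * L n)⁻¹ + 2 * e n * (2 * L n)⁻¹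
          - Real.log (2 * L n + 1) / (2 * L n)
          = (2 * L n - Real.log (2*π) + 2 * e n - Real.log (2 * L n + 1)) / (2 * L n) := by
        have hLn : L n ≠ 0 := by intro h0; rw [h0] at h2; linarith
        field_simp
      rw [heqq]
      gcongr
    · filter_upwards [hub, h2Lpos] with n h1 h2
      rw [div_le_iff₀ h2]
      have : (1 + (2 * L n)⁻¹) * (2 * L n) = 2 * L n + 1 := by
        have hLn : L n ≠ 0 := by intro h0; rw [h0] at h2; linarith
        field_simp
      rw [this]; exact h1
  -- sqrt r tends to 1
  have hq1 : Tendsto (fun n => Real.sqrt ((u n)^2 / (2 * L n))) atTop (𝓝 1) := by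
    have := (Real.continuous_sqrt.tendsto 1).comp hr
    simpa [Function.comp_def] using this
  -- log L / L and (log L)^2 / L tend to 0
  have h1 : Tendsto (fun n => Real.log (L n) / (L n)) atTop (𝓝 0) :=
    (Real.isLittleO_log_id_atTop.tendsto_div_nhds_zero).comp hL
  have h2 : Tendsto (fun n => (Real.log (L n))^2 / (L n)) atTop (𝓝 0) := by
    have hgen : Tendsto (fun x : ℝ => (Real.log x)^2 / x) atTop (𝓝 0) := by
      have hlo := (isLittleO_log_rpow_atTop (by norm_num : (0:ℝ) < 1/2)).tendsto_div_nhds_zero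
      have hm := hlo.mul hlo
      rw [mul_zero] at hm
      apply hm.congr'
      filter_upwards [eventually_gt_atTop (0:ℝ)] with x hx
      rw [div_mul_div_comm, ← Real.rpow_add hx, ← sq]
      norm_num
    exact hgen.comp hL
  -- log r tends to 0
  have hlogr : Tendsto (fun n => Real.log ((u n)^2 / (2 * L n))) atTop (𝓝 0) := by
    have := (Real.continuousAt_log one_ne_zero).tendsto.comp hr
    rwa [Real.log_one] at this
  set r : ℕ → ℝ := fun n => (u n)^2 / (2 * L n) with hrdef
  set q : ℕ → ℝ := fun n => Real.sqrt (r n) with hqdef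
  set D : ℕ → ℝ := fun n => Real.log (4*π) + Real.log (r n) - 2 * e n with hDdef
  have hDlim : Tendsto D atTop (𝓝 (Real.log (4*π) + 0 - 2 * 0)) :=
    (tendsto_const_nhds.add hlogr).sub (he.const_mul 2)
  rw [add_zero, mul_zero, sub_zero] at hDlim
  set B : ℕ → ℝ := fun n =>
      (-(Real.log (L n))^2/(2*L n) - (Real.log (L n)/(2*L n)) * D n) / (2*(q n+1)^2)
      + (-(D n))/(q n+1) + Real.log (2*Real.sqrt π) with hBdef
  -- B tends to 0
  have hB : Tendsto B atTop (𝓝 0) := by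
    have hA1 : Tendsto (fun n => Real.log (L n) / (2 * L n)) atTop (𝓝 0) := by
      have := h1.div_const 2
      rw [zero_div] at this
      exact this.congr (fun n => by ring)
    have hA2 : Tendsto (fun n => -(Real.log (L n))^2 / (2 * L n)) atTop (𝓝 0) := by
      have := (h2.div_const 2).neg
      rw [zero_div, neg_zero] at this
      exact this.congr (fun n => by ring)
    have hq2 : Tendsto (fun n => q n + 1) atTop (𝓝 2) := by
      have := hq1.add_const 1
      norm_num at this
      exact this
    have hden : Tendsto (fun n => 2 * (q n + 1)^2) atTop (𝓝 (2 * 2^2)) :=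
      tendsto_const_nhds.mul (hq2.pow 2)
    have hnum : Tendsto (fun n => -(Real.log (L n))^2/(2*L n)
        - (Real.log (L n)/(2*L n)) * D n) atTop (𝓝 (0 - 0 * Real.log (4*π))) :=
      hA2.sub (hA1.mul hDlim)
    rw [zero_mul, sub_zero] at hnum
    have ht1 : Tendsto (fun n => (-(Real.log (L n))^2/(2*L n)
        - (Real.log (L n)/(2*L n)) * D n) / (2*(q n+1)^2)) atTop (𝓝 (0 / (2*2^2))) :=
      hnum.div hden (by norm_num)
    rw [zero_div] at ht1
    have ht2 : Tendsto (fun n => (-(D n))/(q n+1)) atTop (𝓝 ((-(Real.log (4*π)))/2)) :=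
      hDlim.neg.div hq2 two_ne_zero
    have hlog4 : Real.log (2*Real.sqrt π) = Real.log (4*π) / 2 := by
      have hsq : (2*Real.sqrt π)^2 = 4*π := by
        rw [mul_pow, Real.sq_sqrt hπ.le]; ring
      rw [← hsq, Real.log_pow]
      push_cast; ring
    have := (ht1.add ht2).add (tendsto_const_nhds (x := Real.log (2*Real.sqrt π)))
    rw [hBdef]
    convert this using 2
    rw [hlog4]
    ring
  -- eventual equality
  have heq : ∀ᶠ n in atTop, B n = Real.sqrt (2 * L n) * (u n - Real.sqrt (2 * L n))
          + (1 / 2) * Real.log (L n) + Real.log (2 * Real.sqrt π) := by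
    filter_upwards [hL.eventually_ge_atTop 1] with n hl
    have hl0 : (0:ℝ) < L n := by linarith
    have hx := hu n
    have hw : (0:ℝ) < (u n)^2 := pow_pos hx 2
    have hr0 : 0 < r n := div_pos hw (by linarith)
    have hq0 : 0 < q n := Real.sqrt_pos.2 hr0
    have hq2 : q n ^ 2 = r n := Real.sq_sqrt hr0.le
    have hw2 : (u n)^2 = 2 * L n * r n := by
      rw [hrdef]
      field_simp
    have hxq : u n = Real.sqrt (2*L n) * q n := by
      rw [hqdef, ← Real.sqrt_mul (by linarith : (0:ℝ) ≤ 2*L n), ← hw2,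
        Real.sqrt_sq hx.le]
    have hlogw : Real.log ((u n)^2) = Real.log 2 + Real.log (L n) + Real.log (r n) := by
      rw [hw2, Real.log_mul (by positivity) hr0.ne', Real.log_mul two_ne_zero hl0.ne']
    have h4 : Real.log (4*π) = Real.log 2 + Real.log (2*π) := by
      rw [← Real.log_mul two_ne_zero (by positivity)]
      ring_nf
    have hDid : D n = -(2 * L n * (q n^2 - 1)) - Real.log (L n) := by
      have hr1 := hrel n
      rw [hlogw, hw2] at hr1
      rw [hDdef]
      simp only
      rw [h4, hq2]
      linarith
    set s := Real.sqrt (2 * L n) with hsdef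
    have hss : s * s = 2 * L n := Real.mul_self_sqrt (by linarith)
    have hs0 : 0 < s := Real.sqrt_pos.2 (by linarith)
    rw [hBdef]
    simp only
    rw [hDid, hxq, ← hss]
    have hq1ne : q n + 1 ≠ 0 := by positivity
    field_simp
    ring
  exact Tendsto.congr' heq hB
end

section
/- Let α ∈ (0,1), t₀ > 0, sₙ = t₀/(2 log n)^{1/α}, and set rₙ(t₁,t₂) = ((t₀+sₙt₁)^α + (t₀+sₙt₂)^α − sₙ^α|t₁−t₂|^α)/2 and σₙ(t) = (t₀+sₙt)^{α/2}. Then for all t₁,t₂ ∈ ℝ, limₙ 4 log n · (1 − rₙ(t₁,t₂)/(σₙ(t₁)σₙ(t₂))) = |t₁−t₂|^α. -/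
open Filter Topology

private lemma fbm_alg (A B S T D : ℝ) (hA : A ≠ 0) (hB : B ≠ 0) (hS : S ≠ 0) :
    (2 * T / S) * (1 - (A ^ 2 + B ^ 2 - S * D) / (2 * (A * B)))
      = T * (D - (A - B) ^ 2 / S) / (A * B) := by
  field_simp
  ring

/-- For fBm with index `α ∈ (0,1)` and scaling `sₙ = t₀/(2 log n)^{1/α}`:
`4 log n · (1 − rₙ(t₁,t₂)/(σₙ(t₁)σₙ(t₂))) → |t₁−t₂|^α`. -/
theorem fbm_max_scaling_limit_alpha_lt_one (α t₀ : ℝ) (hα : α ∈ Set.Ioo (0 : ℝ) 1)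
    (ht₀ : 0 < t₀)
    (s : ℕ → ℝ) (hs : ∀ n : ℕ, s n = t₀ / (2 * Real.log n) ^ (1 / α))
    (r : ℕ → ℝ → ℝ → ℝ)
    (hr : ∀ n x₁ x₂, r n x₁ x₂ =
      ((t₀ + s n * x₁) ^ α + (t₀ + s n * x₂) ^ α - s n ^ α * |x₁ - x₂| ^ α) / 2)
    (σ : ℕ → ℝ → ℝ) (hσ : ∀ n x, σ n x = (t₀ + s n * x) ^ (α / 2))
    (t₁ t₂ : ℝ) :
    Tendsto (fun n : ℕ => 4 * Real.log n * (1 - r n t₁ t₂ / (σ n t₁ * σ n t₂)))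
      atTop (𝓝 (|t₁ - t₂| ^ α)) := by
  obtain ⟨hα0, hα1⟩ := hα
  set D : ℝ := |t₁ - t₂| ^ α with hD
  set h : ℝ → ℝ := fun x => (t₀ + x * t₁) ^ (α / 2) - (t₀ + x * t₂) ^ (α / 2) with hh
  set F : ℝ → ℝ := fun x =>
    t₀ ^ α * (D - (h x) ^ 2 / x ^ α) / ((t₀ + x * t₁) ^ (α / 2) * (t₀ + x * t₂) ^ (α / 2))
    with hF
  -- derivative of h at 0
  have hd : ∀ c : ℝ, HasDerivAt (fun x : ℝ => (t₀ + x * c) ^ (α / 2))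
      ((α / 2) * t₀ ^ (α / 2 - 1) * c) 0 := by
    intro c
    have h1 : HasDerivAt (fun x : ℝ => t₀ + x * c) c 0 := by
      simpa using ((hasDerivAt_id (0:ℝ)).mul_const c).const_add t₀
    have h2 : HasDerivAt (fun y : ℝ => y ^ (α / 2)) ((α / 2) * t₀ ^ (α / 2 - 1)) (t₀ + 0 * c) := by
      simpa using Real.hasDerivAt_rpow_const (p := α / 2) (Or.inl (by simpa using ht₀.ne'))
    simpa [Function.comp_def] using h2.comp 0 h1
  have hderiv : HasDerivAt h ((α / 2) * t₀ ^ (α / 2 - 1) * (t₁ - t₂)) 0 := by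
    have := (hd t₁).sub (hd t₂)
    simpa [hh, mul_sub, Pi.sub_def] using this
  have hslope : Tendsto (fun x => h x / x) (𝓝[>] (0:ℝ))
      (𝓝 ((α / 2) * t₀ ^ (α / 2 - 1) * (t₁ - t₂))) := by
    have h0 : h 0 = 0 := by simp [hh]
    have := (hasDerivAt_iff_tendsto_slope.mp hderiv).mono_left
      (nhdsWithin_mono _ fun x (hx : x ∈ Set.Ioi (0:ℝ)) => ne_of_gt hx)
    refine this.congr fun x => ?_
    simp [slope, h0, div_eq_inv_mul]
  -- (h x)^2 / x^α → 0
  have hsq : Tendsto (fun x => (h x) ^ 2 / x ^ α) (𝓝[>] (0:ℝ)) (𝓝 0) := by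
    have hpow : Tendsto (fun x : ℝ => x ^ (2 - α)) (𝓝[>] (0:ℝ)) (𝓝 0) := by
      have hc : ContinuousAt (fun x : ℝ => x ^ (2 - α)) 0 :=
        Real.continuousAt_rpow_const 0 (2 - α) (Or.inr (by linarith))
      have : Tendsto (fun x : ℝ => x ^ (2 - α)) (𝓝 (0:ℝ)) (𝓝 ((0:ℝ) ^ (2 - α))) := hc
      rw [Real.zero_rpow (by linarith : 2 - α ≠ 0)] at this
      exact this.mono_left nhdsWithin_le_nhds
    have := (hslope.pow 2).mul hpow
    rw [mul_zero] at this
    refine this.congr' ?_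
    filter_upwards [self_mem_nhdsWithin] with x (hx : 0 < x)
    have hx0 : x ≠ 0 := hx.ne'
    have hxα : x ^ α ≠ 0 := (Real.rpow_pos_of_pos hx α).ne'
    have hxx : x ^ (2 - α) = x ^ 2 / x ^ α := by
      rw [← Real.rpow_natCast x 2, ← Real.rpow_sub hx]; norm_num
    rw [div_pow, hxx]
    field_simp
  -- continuity of the factors
  have hcont : ∀ c : ℝ, Tendsto (fun x : ℝ => (t₀ + x * c) ^ (α / 2)) (𝓝[>] (0:ℝ))
      (𝓝 (t₀ ^ (α / 2))) := by
    intro c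
    have hc : ContinuousAt (fun x : ℝ => (t₀ + x * c) ^ (α / 2)) 0 := by
      apply ContinuousAt.comp (g := fun y : ℝ => y ^ (α / 2))
      · simpa using Real.continuousAt_rpow_const t₀ (α / 2) (Or.inl ht₀.ne')
      · fun_prop
    have : Tendsto (fun x : ℝ => (t₀ + x * c) ^ (α / 2)) (𝓝 (0:ℝ))
        (𝓝 ((t₀ + 0 * c) ^ (α / 2))) := hc
    rw [zero_mul, add_zero] at this
    exact this.mono_left nhdsWithin_le_nhds
  have ht₀α : (0:ℝ) < t₀ ^ α := Real.rpow_pos_of_pos ht₀ α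
  have hden : t₀ ^ (α / 2) * t₀ ^ (α / 2) = t₀ ^ α := by
    rw [← Real.rpow_add ht₀]; norm_num
  have hFt : Tendsto F (𝓝[>] (0:ℝ)) (𝓝 D) := by
    have hmul : Tendsto (fun x : ℝ => (t₀ + x * t₁) ^ (α / 2) * (t₀ + x * t₂) ^ (α / 2))
        (𝓝[>] (0:ℝ)) (𝓝 (t₀ ^ (α / 2) * t₀ ^ (α / 2))) := (hcont t₁).mul (hcont t₂)
    have hnum : Tendsto (fun x : ℝ => t₀ ^ α * (D - (h x) ^ 2 / x ^ α)) (𝓝[>] (0:ℝ))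
        (𝓝 (t₀ ^ α * (D - 0))) := (tendsto_const_nhds.sub hsq).const_mul _
    have key := hnum.div hmul (by rw [hden]; exact ht₀α.ne')
    have hval : t₀ ^ α * (D - 0) / (t₀ ^ (α / 2) * t₀ ^ (α / 2)) = D := by
      rw [hden, sub_zero]; field_simp
    rw [hval] at key
    exact key.congr fun x => rfl
  -- s tends to 0 within (0, ∞)
  have hlog : Tendsto (fun n : ℕ => Real.log n) atTop atTop :=
    Real.tendsto_log_atTop.comp tendsto_natCast_atTop_atTop
  have hL : Tendsto (fun n : ℕ => (2 * Real.log n) ^ (1 / α)) atTop atTop :=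
    (tendsto_rpow_atTop (by positivity : (0:ℝ) < 1 / α)).comp (hlog.const_mul_atTop two_pos)
  have hs0 : Tendsto s atTop (𝓝 0) := by
    have := Tendsto.div_atTop (tendsto_const_nhds (x := t₀)) hL
    exact this.congr fun n => (hs n).symm
  have hslarge : ∀ᶠ n : ℕ in atTop, 0 < s n := by
    filter_upwards [hlog.eventually_gt_atTop 0] with n hn
    rw [hs n]
    positivity
  have hsW : Tendsto s atTop (𝓝[>] (0:ℝ)) :=
    tendsto_nhdsWithin_of_tendsto_nhds_of_eventually_within s hs0 hslarge
  have hpos : ∀ c : ℝ, ∀ᶠ n : ℕ in atTop, 0 < t₀ + s n * c := by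
    intro c
    have : Tendsto (fun n => t₀ + s n * c) atTop (𝓝 (t₀ + 0 * c)) :=
      tendsto_const_nhds.add (hs0.mul_const c)
    rw [zero_mul, add_zero] at this
    exact this.eventually_const_lt ht₀
  -- eventual equality of the two sequences
  have heq : ∀ᶠ n : ℕ in atTop,
      4 * Real.log n * (1 - r n t₁ t₂ / (σ n t₁ * σ n t₂)) = F (s n) := by
    filter_upwards [hlog.eventually_gt_atTop 0, hpos t₁, hpos t₂, hslarge]
      with n hln h1 h2 hsn
    have hL0 : (0:ℝ) ≤ 2 * Real.log n := by linarith
    have hsα : s n ^ α = t₀ ^ α / (2 * Real.log n) := by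
      rw [hs n, Real.div_rpow ht₀.le (Real.rpow_nonneg hL0 _), ← Real.rpow_mul hL0,
        one_div, inv_mul_cancel₀ hα0.ne', Real.rpow_one]
    have hfour : 4 * Real.log n = 2 * t₀ ^ α / s n ^ α := by
      rw [hsα]
      rw [div_div_eq_mul_div]
      field_simp
      try ring
    set A := (t₀ + s n * t₁) ^ (α / 2) with hA
    set B := (t₀ + s n * t₂) ^ (α / 2) with hB
    have hA0 : 0 < A := Real.rpow_pos_of_pos h1 _
    have hB0 : 0 < B := Real.rpow_pos_of_pos h2 _
    have hS0 : 0 < s n ^ α := Real.rpow_pos_of_pos hsn _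
    have hA2 : A ^ 2 = (t₀ + s n * t₁) ^ α := by
      rw [hA, ← Real.rpow_natCast _ 2, ← Real.rpow_mul h1.le]; norm_num
    have hB2 : B ^ 2 = (t₀ + s n * t₂) ^ α := by
      rw [hB, ← Real.rpow_natCast _ 2, ← Real.rpow_mul h2.le]; norm_num
    have hrr : r n t₁ t₂ = (A ^ 2 + B ^ 2 - s n ^ α * D) / 2 := by
      rw [hr, hA2, hB2, hD]
    have hσσ : σ n t₁ * σ n t₂ = A * B := by rw [hσ, hσ, hA, hB]
    have hhs : h (s n) = A - B := by simp [hh, hA, hB, mul_comm]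
    rw [hrr, hσσ, hfour]
    simp only [hF, hhs, ← hA, ← hB]
    rw [div_div]
    exact fbm_alg A B (s n ^ α) (t₀ ^ α) D hA0.ne' hB0.ne' hS0.ne'
  exact Tendsto.congr' (heq.mono fun n hn => hn.symm) (hFt.comp hsW)
end

section
/- Let α ∈ (1,2], t₀ > 0, and sₙ → 0 with sₙ = O(1/log n). With rₙ(t₁,t₂) = ((t₀+sₙt₁)^α + (t₀+sₙt₂)^α − sₙ^α|t₁−t₂|^α)/2 and σₙ(t) = (t₀+sₙt)^{α/2}, for all t₁,t₂ ∈ ℝ: limₙ 4 log n · (1 − rₙ(t₁,t₂)/(σₙ(t₁)σₙ(t₂))) = 0. -/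
open Filter Topology Asymptotics

lemma rpow_add_le_add_rpow_real {p : ℝ} (a b : ℝ) (ha : 0 ≤ a) (hb : 0 ≤ b)
    (hp : 0 ≤ p) (hp1 : p ≤ 1) : (a + b) ^ p ≤ a ^ p + b ^ p := by
  have h := NNReal.rpow_add_le_add_rpow a.toNNReal b.toNNReal hp hp1
  rw [← Real.toNNReal_add ha hb] at h
  have h2 := NNReal.coe_le_coe.mpr h
  simpa [NNReal.coe_rpow, Real.coe_toNNReal, ha, hb, add_nonneg ha hb] using h2

lemma abs_rpow_sub_rpow_le_aux {p : ℝ} (hp : 0 ≤ p) (hp1 : p ≤ 1) {x y : ℝ}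
    (hx : 0 ≤ x) (hy : 0 ≤ y) : |x ^ p - y ^ p| ≤ |x - y| ^ p := by
  wlog h : y ≤ x
  · rw [abs_sub_comm, abs_sub_comm x y]
    exact this hp hp1 hy hx (le_of_not_ge h)
  have h1 : x ^ p ≤ (x - y) ^ p + y ^ p := by
    calc x ^ p = (x - y + y) ^ p := by ring_nf
    _ ≤ _ := rpow_add_le_add_rpow_real _ _ (by linarith) hy hp hp1
  have h2 : y ^ p ≤ x ^ p := Real.rpow_le_rpow hy h hp
  rw [abs_of_nonneg (by linarith), abs_of_nonneg (by linarith)]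
  linarith

/-- For fBm with index `α ∈ (1,2]` and any scaling `sₙ → 0⁺` with `sₙ = O(1/log n)`:
`4 log n · (1 − rₙ(t₁,t₂)/(σₙ(t₁)σₙ(t₂))) → 0`. -/
theorem fbm_max_scaling_limit_alpha_gt_one (α t₀ : ℝ) (hα : α ∈ Set.Ioc (1 : ℝ) 2)
    (ht₀ : 0 < t₀)
    (s : ℕ → ℝ) (hspos : ∀ n, 0 < s n) (hs0 : Tendsto s atTop (𝓝 0))
    (hsO : s =O[atTop] fun n : ℕ => 1 / Real.log n)
    (r : ℕ → ℝ → ℝ → ℝ)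
    (hr : ∀ n x₁ x₂, r n x₁ x₂ =
      ((t₀ + s n * x₁) ^ α + (t₀ + s n * x₂) ^ α - s n ^ α * |x₁ - x₂| ^ α) / 2)
    (σ : ℕ → ℝ → ℝ) (hσ : ∀ n x, σ n x = (t₀ + s n * x) ^ (α / 2))
    (t₁ t₂ : ℝ) :
    Tendsto (fun n : ℕ => 4 * Real.log n * (1 - r n t₁ t₂ / (σ n t₁ * σ n t₂)))
      atTop (𝓝 0) := by
  obtain ⟨hα1, hα2⟩ := hα
  have hΔ : (0:ℝ) ≤ |t₁ - t₂| := abs_nonneg _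
  have hlog_ev : ∀ᶠ n : ℕ in atTop, Real.log n ≠ 0 ∧ 0 ≤ Real.log n := by
    filter_upwards [eventually_ge_atTop 3] with n hn
    have h1 : (1:ℝ) < n := by exact_mod_cast (by omega : 1 < n)
    have hl := Real.log_pos h1
    exact ⟨ne_of_gt hl, hl.le⟩
  -- Step A : log n * s n ^ α → 0
  have hO1 : (fun n : ℕ => s n * Real.log n) =O[atTop] (fun _ => (1:ℝ)) := by
    have h := hsO.mul (isBigO_refl (fun n : ℕ => Real.log n) atTop)
    refine h.trans (IsBigO.of_bound 1 ?_)
    filter_upwards [hlog_ev] with n hn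
    simp [one_div, inv_mul_cancel₀ hn.1]
  have hsm : Tendsto (fun n => s n ^ (α - 1)) atTop (𝓝 0) := by
    have hc : ContinuousAt (fun x : ℝ => x ^ (α - 1)) 0 :=
      Real.continuousAt_rpow_const 0 (α - 1) (Or.inr (by linarith))
    have h := hc.tendsto.comp hs0
    simpa [Function.comp_def, Real.zero_rpow (by intro h; linarith [h] : α - 1 ≠ 0)] using h
  have hA : Tendsto (fun n : ℕ => Real.log n * s n ^ α) atTop (𝓝 0) := by
    have heq : (fun n : ℕ => Real.log n * s n ^ α)
        = fun n => (s n * Real.log n) * s n ^ (α - 1) := by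
      funext n
      have e1 : s n ^ α = s n ^ (1:ℝ) * s n ^ (α - 1) := by
        rw [← Real.rpow_add (hspos n)]; norm_num
      rw [e1, Real.rpow_one]; ring
    rw [heq, ← isLittleO_one_iff ℝ]
    have := hO1.mul_isLittleO ((isLittleO_one_iff ℝ).mpr hsm)
    simpa using this
  -- eventual positivity of a, b
  have h₁ : ∀ᶠ n : ℕ in atTop, t₀ / 2 ≤ t₀ + s n * t₁ := by
    have ht : Tendsto (fun n => s n * t₁) atTop (𝓝 0) := by
      have h := hs0.mul_const t₁
      simpa using h
    have hm := ht (Metric.ball_mem_nhds (0:ℝ) (by positivity : (0:ℝ) < t₀ / 2))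
    filter_upwards [hm] with n hn
    have hn' : |s n| * |t₁| < t₀ / 2 := by simpa [Real.dist_eq] using hn
    rw [← abs_mul] at hn'
    have := abs_lt.mp hn'
    linarith [this.1]
  have h₂ : ∀ᶠ n : ℕ in atTop, t₀ / 2 ≤ t₀ + s n * t₂ := by
    have ht : Tendsto (fun n => s n * t₂) atTop (𝓝 0) := by
      have h := hs0.mul_const t₂
      simpa using h
    have hm := ht (Metric.ball_mem_nhds (0:ℝ) (by positivity : (0:ℝ) < t₀ / 2))
    filter_upwards [hm] with n hn
    have hn' : |s n| * |t₂| < t₀ / 2 := by simpa [Real.dist_eq] using hn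
    rw [← abs_mul] at hn'
    have := abs_lt.mp hn'
    linarith [this.1]
  -- Step B : eventual bound
  have hev : ∀ᶠ n : ℕ in atTop,
      ‖4 * Real.log n * (1 - r n t₁ t₂ / (σ n t₁ * σ n t₂))‖ ≤
        (2 * |t₁ - t₂| ^ α / (t₀ / 2) ^ α) * (Real.log n * s n ^ α) := by
    filter_upwards [h₁, h₂, hlog_ev] with n ha2 hb2 hlogn
    set a := t₀ + s n * t₁ with ha_def
    set b := t₀ + s n * t₂ with hb_def
    have ht2 : (0:ℝ) < t₀ / 2 := by positivity
    have ha : 0 < a := lt_of_lt_of_le ht2 ha2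
    have hb : 0 < b := lt_of_lt_of_le ht2 hb2
    have hα2' : (0:ℝ) ≤ α / 2 := by linarith
    have hA2 : (a ^ (α/2)) ^ 2 = a ^ α := by
      rw [sq, ← Real.rpow_add ha]; norm_num
    have hB2 : (b ^ (α/2)) ^ 2 = b ^ α := by
      rw [sq, ← Real.rpow_add hb]; norm_num
    have hABpos : 0 < a ^ (α/2) * b ^ (α/2) := by positivity
    have key : |a ^ (α/2) - b ^ (α/2)| ≤ |a - b| ^ (α/2) :=
      abs_rpow_sub_rpow_le_aux (by linarith) (by linarith) ha.le hb.le
    have hab : |a - b| = s n * |t₁ - t₂| := by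
      have e : a - b = s n * (t₁ - t₂) := by rw [ha_def, hb_def]; ring
      rw [e, abs_mul, abs_of_pos (hspos n)]
    have hsq : (a ^ (α/2) - b ^ (α/2)) ^ 2 ≤ s n ^ α * |t₁ - t₂| ^ α := by
      have h1 : (a ^ (α/2) - b ^ (α/2)) ^ 2 = |a ^ (α/2) - b ^ (α/2)| ^ 2 :=
        (sq_abs _).symm
      have h2 : (|a - b| ^ (α/2)) ^ 2 = |a - b| ^ α := by
        rw [← Real.rpow_natCast (|a - b| ^ (α/2)) 2, ← Real.rpow_mul (abs_nonneg _)]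
        norm_num
      have h3 : |a - b| ^ α = s n ^ α * |t₁ - t₂| ^ α := by
        rw [hab, Real.mul_rpow (hspos n).le hΔ]
      calc (a ^ (α/2) - b ^ (α/2)) ^ 2 = |a ^ (α/2) - b ^ (α/2)| ^ 2 := h1
        _ ≤ (|a - b| ^ (α/2)) ^ 2 := by
            exact pow_le_pow_left₀ (abs_nonneg _) key 2
        _ = s n ^ α * |t₁ - t₂| ^ α := by rw [h2, h3]
    have hσσ : σ n t₁ * σ n t₂ = a ^ (α/2) * b ^ (α/2) := by
      rw [hσ, hσ]
    have hden_lb : (t₀/2) ^ α ≤ a ^ (α/2) * b ^ (α/2) := by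
      have e : (t₀/2) ^ (α/2) * (t₀/2) ^ (α/2) = (t₀/2) ^ α := by
        rw [← Real.rpow_add ht2]; norm_num
      calc (t₀/2) ^ α = (t₀/2) ^ (α/2) * (t₀/2) ^ (α/2) := e.symm
        _ ≤ a ^ (α/2) * b ^ (α/2) := by
            apply mul_le_mul (Real.rpow_le_rpow ht2.le ha2 hα2')
              (Real.rpow_le_rpow ht2.le hb2 hα2') (by positivity) (by positivity)
    have hexpr : 1 - r n t₁ t₂ / (σ n t₁ * σ n t₂)
        = (s n ^ α * |t₁ - t₂| ^ α - (a ^ (α/2) - b ^ (α/2)) ^ 2)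
            / (2 * (a ^ (α/2) * b ^ (α/2))) := by
      have hrn : r n t₁ t₂ =
          ((a ^ (α/2)) ^ 2 + (b ^ (α/2)) ^ 2 - s n ^ α * |t₁ - t₂| ^ α) / 2 := by
        rw [hr, hA2, hB2]
      rw [hrn, hσσ]
      field_simp
      ring
    have habs : |1 - r n t₁ t₂ / (σ n t₁ * σ n t₂)| ≤
        s n ^ α * |t₁ - t₂| ^ α / (2 * (t₀/2) ^ α) := by
      have hPpos : (0:ℝ) < (t₀/2) ^ α := Real.rpow_pos_of_pos ht2 α
      rw [hexpr, abs_div, abs_of_nonneg (sub_nonneg.mpr hsq),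
        abs_of_pos (mul_pos two_pos hABpos)]
      have hsα : 0 ≤ s n ^ α * |t₁ - t₂| ^ α :=
        mul_nonneg (Real.rpow_nonneg (hspos n).le α) (Real.rpow_nonneg hΔ α)
      exact div_le_div₀ hsα (by nlinarith [sq_nonneg (a ^ (α/2) - b ^ (α/2))])
        (mul_pos two_pos hPpos) (by linarith)
    have hPpos : (0:ℝ) < (t₀/2) ^ α := Real.rpow_pos_of_pos ht2 α
    calc ‖4 * Real.log n * (1 - r n t₁ t₂ / (σ n t₁ * σ n t₂))‖
        = 4 * Real.log n * |1 - r n t₁ t₂ / (σ n t₁ * σ n t₂)| := by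
          rw [Real.norm_eq_abs, abs_mul, abs_of_nonneg (by linarith [hlogn.2])]
      _ ≤ 4 * Real.log n * (s n ^ α * |t₁ - t₂| ^ α / (2 * (t₀/2) ^ α)) := by
          apply mul_le_mul_of_nonneg_left habs (by linarith [hlogn.2])
      _ = (2 * |t₁ - t₂| ^ α / (t₀ / 2) ^ α) * (Real.log n * s n ^ α) := by
          field_simp
          ring
  have hlim : Tendsto (fun n : ℕ =>
      (2 * |t₁ - t₂| ^ α / (t₀ / 2) ^ α) * (Real.log n * s n ^ α)) atTop (𝓝 0) := by
    simpa using hA.const_mul (2 * |t₁ - t₂| ^ α / (t₀ / 2) ^ α)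
  exact squeeze_zero_norm' hev hlim
end
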